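/- arXiv:1507.06187 — 2 statements merged into one kernel-verified Lean document; each statement's English description precedes it below -/
import Mathlib

section
/- Let G = (V,E) be a graph, A a countably infinite subset of V such that for every finite F ⊆ A the common neighborhood N_G[F] = ⋂_{v∈F} N_G(v) is infinite. Then for any edge colouring c : E → r with r finite, there exists a partition V = V_0 ∪ ... ∪ V_{r-1} and a colour i_c < r such that for every i < r and every finite set F ⊆ A ∩ V_i, the set N_G[F, i] ∩ V_{i_c} is infinite, where N_G[F, i] = ⋂_{v∈F} {w : {v,w} ∈ E, c(v,w) = i}. -/
open Cardinal

universe u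

variable {V : Type u}

/-- Two walks between the same endpoints intersect only in the endpoints. -/
def IntDisjoint {G : SimpleGraph V} {v w : V} (p q : G.Walk v w) : Prop :=
  ∀ x, x ∈ p.support → x ∈ q.support → x = v ∨ x = w

/-- `A` is κ-unseparable in `G`: any two distinct vertices of `A` are joined by
κ-many pairwise internally disjoint finite paths. -/
def Unseparable (G : SimpleGraph V) (A : Set V) (κ : Cardinal.{u}) : Prop :=
  ∀ v ∈ A, ∀ w ∈ A, v ≠ w →
    ∃ P : Set (G.Path v w), κ ≤ #P ∧
      ∀ p ∈ P, ∀ q ∈ P, p ≠ q → IntDisjoint (p : G.Path v w).1 (q : G.Path v w).1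

/-- A path in Rado's sense inside the graph `G`: a set of vertices together with a
well-ordering such that the set of earlier neighbours of each vertex is cofinal below it. -/
structure RadoPath (G : SimpleGraph V) where
  verts : Set V
  lt : verts → verts → Prop
  wo : IsWellOrder verts lt
  cofinal : ∀ v x : verts, lt x v → ∃ w : verts, G.Adj ↑w ↑v ∧ lt w v ∧ ¬ lt w x

/-- The order type of a Rado path. -/
noncomputable def RadoPath.otype {G : SimpleGraph V} (P : RadoPath G) : Ordinal.{u} :=
  @Ordinal.type P.verts P.lt P.wo

/-- `P` is concentrated on `A`: for every limit point `y` of `P` and every `x` below `y`,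
the interval `[x, y)` contains a neighbour of `y` lying in `A`. -/
def RadoPath.ConcentratedOn {G : SimpleGraph V} (P : RadoPath G) (A : Set V) : Prop :=
  ∀ y : P.verts, ((∃ x, P.lt x y) ∧ ∀ x, P.lt x y → ∃ z, P.lt x z ∧ P.lt z y) →
    ∀ x : P.verts, P.lt x y →
      ∃ w : P.verts, (↑w : V) ∈ A ∧ G.Adj ↑w ↑y ∧ ¬ P.lt w x ∧ P.lt w y

/-- The subgraph of `G` consisting of the edges of colour `i`. -/
def colGraph (G : SimpleGraph V) {r : ℕ} (c : Sym2 V → Fin r) (i : Fin r) :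
    SimpleGraph V where
  Adj a b := G.Adj a b ∧ c s(a, b) = i
  symm := by
    constructor
    intro a b h
    refine ⟨h.1.symm, ?_⟩
    rw [Sym2.eq_swap]
    exact h.2
  loopless := by constructor; intro a h; exact (G.ne_of_adj h.1) rfl

/-- The restriction of `G` to the vertices in `S` (as a graph on the same vertex type). -/
def restrictTo (G : SimpleGraph V) (S : Set V) : SimpleGraph V where
  Adj a b := G.Adj a b ∧ a ∈ S ∧ b ∈ S
  symm := by constructor; intro a b h; exact ⟨h.1.symm, h.2.2, h.2.1⟩
  loopless := by constructor; intro a h; exact (G.ne_of_adj h.1) rfl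

/-- The common neighbourhood `N_G[X] = ⋂_{x ∈ X} N_G(x)`. -/
def commonNbhd (G : SimpleGraph V) (X : Set V) : Set V :=
  {v | ∀ x ∈ X, G.Adj x v}

/-- `G` is κ-complete: it has at least κ vertices and every vertex has fewer than κ
non-neighbours. -/
def KComplete (G : SimpleGraph V) (κ : Cardinal.{u}) : Prop :=
  κ ≤ #V ∧ ∀ x : V, #{v : V | ¬ G.Adj x v} < κ

/-- `G` is of type `H_{κ,κ}` with decomposition `(A, B)`. -/
def IsHDecomp (G : SimpleGraph V) (κ : Cardinal.{u}) (A B : Set V) : Prop :=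
  ∃ a b : Ordinal.{u} → V,
    Set.InjOn a (Set.Iio κ.ord) ∧ Set.InjOn b (Set.Iio κ.ord) ∧
    a '' Set.Iio κ.ord = A ∧ b '' Set.Iio κ.ord = B ∧
    ∀ ξ ζ : Ordinal.{u}, ξ ≤ ζ → ζ < κ.ord → G.Adj (a ξ) (b ζ)

/-- `G` is of type `H_{κ,κ}` with main class `A`. -/
def IsHType (G : SimpleGraph V) (κ : Cardinal.{u}) (A : Set V) : Prop :=
  ∃ B : Set V, IsHDecomp G κ A B

/-- A finite family of increasing covers, witnessing that a set is (𝒜,κ)-centered. -/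
structure CenteredWitness (V : Type u) where
  I : Type
  fin : Finite I
  lam : I → Ordinal.{u}
  fam : I → Ordinal.{u} → Set V

/-- An 𝒜-box: the intersection `⋂_{i ∈ I} A^i_{f i}`. -/
def CenteredWitness.Box (𝒜 : CenteredWitness V) (f : 𝒜.I → Ordinal.{u}) : Set V :=
  ⋂ i, 𝒜.fam i (f i)

/-- `A` is (𝒜,κ)-centered in `G`. -/
def IsCentered (G : SimpleGraph V) (A : Set V) (𝒜 : CenteredWitness V)
    (κ : Cardinal.{u}) : Prop :=
  (∀ i, ∀ α β : Ordinal.{u}, α ≤ β → β < 𝒜.lam i → 𝒜.fam i α ⊆ 𝒜.fam i β) ∧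
  (∀ i, A ⊆ ⋃ α ∈ Set.Iio (𝒜.lam i), 𝒜.fam i α) ∧
  (∀ f : 𝒜.I → Ordinal.{u}, (∀ i, f i < 𝒜.lam i) → κ ≤ #(commonNbhd G (𝒜.Box f)))

/-- The set `S` carries a (finite or ω-type) path all of whose edges have colour `i`. -/
def CarriesPath {r : ℕ} (c : Sym2 ℕ → Fin r) (i : Fin r) (S : Set ℕ) : Prop :=
  (∃ l : List ℕ, l.Nodup ∧ (↑l.toFinset : Set ℕ) = S ∧
      l.Chain' (fun a b => c s(a, b) = i)) ∨
  (∃ f : ℕ → ℕ, Function.Injective f ∧ Set.range f = S ∧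
      ∀ n : ℕ, c s(f n, f (n + 1)) = i)

/-- Lemma on partitioning via an ultrafilter. -/
theorem stmt1 {V : Type} (G : SimpleGraph V) (A : Set V) (hA : A.Countable)
    (hAinf : A.Infinite)
    (hN : ∀ F : Finset V, ↑F ⊆ A → (commonNbhd G ↑F).Infinite)
    (r : ℕ) (hr : 0 < r) (c : Sym2 V → Fin r) :
    ∃ d : V → Fin r, ∃ ic : Fin r,
      ∀ i : Fin r, ∀ F : Finset V, ↑F ⊆ A ∩ {v | d v = i} →
        {w | w ∈ commonNbhd (colGraph G c i) ↑F ∧ d w = ic}.Infinite := by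
  classical
  -- The filter generated by cofinite sets and all common neighbourhoods of finite F ⊆ A
  set L : Filter V :=
    Filter.cofinite ⊓ ⨅ F ∈ {F : Finset V | ↑F ⊆ A}, Filter.principal (commonNbhd G ↑F)
    with hLdef
  have hdir : DirectedOn
      ((fun F : Finset V => Filter.principal (commonNbhd G (↑F : Set V))) ⁻¹'o (· ≥ ·))
      {F : Finset V | ↑F ⊆ A} := by
    intro F1 h1 F2 h2
    refine ⟨F1 ∪ F2, ?_, ?_, ?_⟩
    · intro x hx
      rcases Finset.mem_coe.1 hx with hx
      rcases Finset.mem_union.1 hx with h | h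
      · exact h1 h
      · exact h2 h
    · refine Filter.principal_mono.2 ?_
      intro w hw x hx
      exact hw x (by simp [Finset.mem_union, hx])
    · refine Filter.principal_mono.2 ?_
      intro w hw x hx
      exact hw x (by simp [Finset.mem_union, hx])
  have hne : Set.Nonempty {F : Finset V | ↑F ⊆ A} := ⟨∅, by simp⟩
  have hmem : ∀ F : Finset V, ↑F ⊆ A → commonNbhd G ↑F ∈ L := by
    intro F hF
    refine Filter.mem_inf_of_right ?_
    have h1 : (⨅ F ∈ {F : Finset V | ↑F ⊆ A}, Filter.principal (commonNbhd G (↑F : Set V)))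
        ≤ Filter.principal (commonNbhd G ↑F) := biInf_le _ hF
    exact h1 (Filter.mem_principal_self _)
  have hinf : ∀ s ∈ L, s.Infinite := by
    intro s hs
    rw [hLdef, Filter.mem_inf_iff] at hs
    obtain ⟨t, ht, u, hu, rfl⟩ := hs
    rw [Filter.mem_biInf_of_directed hdir hne] at hu
    obtain ⟨F, hF, hu⟩ := hu
    rw [Filter.mem_principal] at hu
    have h2 : (commonNbhd G (↑F : Set V) \ tᶜ).Infinite :=
      (hN F hF).diff (by rwa [Filter.mem_cofinite] at ht)
    refine h2.mono ?_
    intro w hw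
    exact ⟨by simpa using hw.2, hu hw.1⟩
  have hLne : L.NeBot := by
    refine ⟨fun h => ?_⟩
    exact (hinf ∅ (by rw [h]; exact Filter.mem_bot)) Set.finite_empty
  let U : Ultrafilter V := Ultrafilter.of L
  have hUL : (U : Filter V) ≤ L := Ultrafilter.of_le L
  have hUcommon : ∀ F : Finset V, ↑F ⊆ A → commonNbhd G ↑F ∈ U :=
    fun F hF => hUL (hmem F hF)
  have hUinf : ∀ s ∈ U, s.Infinite := by
    intro s hs
    by_contra h
    rw [Set.not_infinite] at h
    have h1 : sᶜ ∈ L :=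
      Filter.mem_inf_of_left (by rwa [Filter.mem_cofinite, compl_compl])
    exact (Ultrafilter.compl_notMem_iff.2 hs) (hUL h1)
  -- For each vertex of A, some colour class of its neighbourhood lies in U
  have hcolor : ∀ v ∈ A, ∃ i : Fin r, {w | (colGraph G c i).Adj v w} ∈ U := by
    intro v hv
    have h1 : commonNbhd G (↑({v} : Finset V) : Set V) ∈ U :=
      hUcommon {v} (by simpa using hv)
    have h2 : commonNbhd G (↑({v} : Finset V) : Set V)
        = ⋃ i ∈ (Set.univ : Set (Fin r)), {w | (colGraph G c i).Adj v w} := by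
      ext w
      simp only [commonNbhd, colGraph, Set.mem_setOf_eq, Set.mem_iUnion, Set.mem_univ,
        Finset.coe_singleton, Set.mem_singleton_iff, exists_prop, true_and]
      constructor
      · intro h
        exact ⟨c s(v, w), h v rfl, rfl⟩
      · rintro ⟨i, h, -⟩ x rfl
        exact h
    rw [h2, Ultrafilter.finite_biUnion_mem_iff Set.finite_univ] at h1
    obtain ⟨i, -, hi⟩ := h1
    exact ⟨i, hi⟩
  let d : V → Fin r := fun v =>
    if h : ∃ i : Fin r, {w | (colGraph G c i).Adj v w} ∈ U then h.choose else ⟨0, hr⟩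
  have hd : ∀ v ∈ A, {w | (colGraph G c (d v)).Adj v w} ∈ U := by
    intro v hv
    have h := hcolor v hv
    have : d v = h.choose := dif_pos h
    rw [this]
    exact h.choose_spec
  -- choose the colour class of the partition that is in U
  have hic : ∃ ic : Fin r, {v | d v = ic} ∈ U := by
    have h1 : (⋃ i ∈ (Set.univ : Set (Fin r)), {v | d v = i}) ∈ U := by
      have : (⋃ i ∈ (Set.univ : Set (Fin r)), {v | d v = i}) = Set.univ := by
        ext v; simp
      rw [this]
      exact Filter.univ_mem
    rw [Ultrafilter.finite_biUnion_mem_iff Set.finite_univ] at h1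
    obtain ⟨ic, -, hic⟩ := h1
    exact ⟨ic, hic⟩
  obtain ⟨ic, hic⟩ := hic
  refine ⟨d, ic, ?_⟩
  intro i F hF
  have hmemU : {w | w ∈ commonNbhd (colGraph G c i) ↑F ∧ d w = ic} ∈ U := by
    have h1 : (⋂ v ∈ (↑F : Set V), {w | (colGraph G c i).Adj v w}) ∈ (U : Filter V) := by
      rw [Filter.biInter_mem F.finite_toSet]
      intro v hv
      have hvA : v ∈ A := (hF hv).1
      have hvi : d v = i := (hF hv).2
      have := hd v hvA
      rwa [hvi] at this
    have h2 : (⋂ v ∈ (↑F : Set V), {w | (colGraph G c i).Adj v w}) ∩ {v | d v = ic}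
        ⊆ {w | w ∈ commonNbhd (colGraph G c i) ↑F ∧ d w = ic} := by
      intro w hw
      refine ⟨?_, hw.2⟩
      intro x hx
      exact Set.mem_iInter₂.1 hw.1 x hx
    exact Ultrafilter.mem_coe.1
      (Filter.mem_of_superset (Filter.inter_mem h1 (Ultrafilter.mem_coe.2 hic)) h2)
  exact hUinf _ hmemU
end

section
/- Let κ be an infinite cardinal with cofinality μ, let λ ≤ μ, let G = (V,E) be a graph of type H_{κ,κ} with decomposition (A,B), let c be an r-edge colouring and I ⊆ r. Suppose that for every subset à ⊆ A of size < λ there is a finite set a ⊆ A \ à with |B \ ⋃{N(x,i) : x ∈ a, i ∈ I}| < κ. Then there is a λ-configuration in colours I inside A: pairwise disjoint finite sets {a_ξ : ξ < λ} ⊆ [A]^{<ω} and distinct vertices {y_ξ : ξ < λ} such that y_ζ ∈ ⋃{N(x,i) : x ∈ a_ξ, i ∈ I} for all ξ ≤ ζ < λ. -/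
open Cardinal

universe u

variable {V : Type u}

namespace Stmt13Aux

/-- The colour-`I` neighbourhood of a finite set. -/
def NSet (G : SimpleGraph V) {r : ℕ} (c : Sym2 V → Fin r) (I : Set (Fin r))
    (a : Finset V) : Set V :=
  ⋃ x ∈ a, ⋃ i ∈ I, (colGraph G c i).neighborSet x

theorem remain_big {κ : Cardinal.{u}} (hκ : ℵ₀ ≤ κ) {T S B : Set V} (hTB : T ⊆ B)
    (hT : κ ≤ #T) (hS : #↥(B \ S) < κ) : κ ≤ #↥(T ∩ S) := by
  by_contra hlt
  push_neg at hlt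
  have hsub : T ⊆ (T ∩ S) ∪ (B \ S) := by
    intro t ht
    by_cases hts : t ∈ S
    · exact Or.inl ⟨ht, hts⟩
    · exact Or.inr ⟨hTB ht, hts⟩
  have h2 := (Cardinal.mk_le_mk_of_subset hsub).trans (Cardinal.mk_union_le _ _)
  exact absurd (hT.trans h2) (not_le.mpr (Cardinal.add_lt_of_lt hκ hlt hS))

theorem exists_big {κ : Cardinal.{u}} (hκ : ℵ₀ ≤ κ) (f : V → Set V) (T : Set V)
    (a : Finset V) (hbig : κ ≤ #↥(T ∩ ⋃ x ∈ a, f x)) : ∃ z ∈ a, κ ≤ #↥(T ∩ f z) := by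
  classical
  induction a using Finset.induction_on with
  | empty =>
    exfalso
    simp only [Finset.notMem_empty, Set.iUnion_of_empty, Set.iUnion_empty,
      Set.inter_empty, Cardinal.mk_emptyCollection] at hbig
    exact absurd (lt_of_lt_of_le Cardinal.aleph0_pos (hκ.trans hbig)) (lt_irrefl 0)
  | @insert w s hw ih =>
    have hsplit : T ∩ ⋃ x ∈ insert w s, f x ⊆ (T ∩ f w) ∪ (T ∩ ⋃ x ∈ s, f x) := by
      intro t ⟨ht, hu⟩
      simp only [Finset.mem_insert, Set.mem_iUnion, exists_prop] at hu
      obtain ⟨x, hx | hx, hfx⟩ := hu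
      · exact Or.inl ⟨ht, hx ▸ hfx⟩
      · exact Or.inr ⟨ht, Set.mem_iUnion₂.mpr ⟨x, hx, hfx⟩⟩
    have hone : κ ≤ #↥(T ∩ f w) ∨ κ ≤ #↥(T ∩ ⋃ x ∈ s, f x) := by
      by_contra hno
      push_neg at hno
      have h2 := (Cardinal.mk_le_mk_of_subset hsplit).trans (Cardinal.mk_union_le _ _)
      exact absurd (hbig.trans h2) (not_le.mpr (Cardinal.add_lt_of_lt hκ hno.1 hno.2))
    rcases hone with hone | hone
    · exact ⟨w, Finset.mem_insert_self w s, hone⟩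
    · obtain ⟨z, hz, hzbig⟩ := ih hone
      exact ⟨z, Finset.mem_insert_of_mem hz, hzbig⟩

theorem iUnion_Iio_eq (ζ : Ordinal.{u}) (g : Set.Iio ζ → Set V) :
    ⋃ ξ, g ξ = ⋃ t : ζ.ToType, g ((Ordinal.ToType.mk (o := ζ)).symm t) := by
  ext x
  simp only [Set.mem_iUnion]
  constructor
  · rintro ⟨ξ, hx⟩
    exact ⟨Ordinal.ToType.mk (o := ζ) ξ, by rwa [OrderIso.symm_apply_apply]⟩
  · rintro ⟨t, hx⟩
    exact ⟨_, hx⟩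

theorem mk_iUnion_Iio_lt {κ : Cardinal.{u}} (hκ : ℵ₀ ≤ κ) {ζ : Ordinal.{u}}
    (hζ : ζ.card < κ.ord.cof) (g : Set.Iio ζ → Set V) (hg : ∀ ξ, #↥(g ξ) < κ) :
    #↥(⋃ ξ, g ξ) < κ := by
  rw [iUnion_Iio_eq]
  refine lt_of_le_of_lt (Cardinal.mk_iUnion_le _) ?_
  have h1 : #ζ.ToType < κ := by
    rw [Cardinal.mk_toType]
    exact hζ.trans_le (Ordinal.cof_ord_le κ)
  refine Cardinal.mul_lt_of_lt hκ h1 (Ordinal.iSup_lt ?_ ?_)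
  · rwa [Cardinal.mk_toType]
  · exact fun t => hg _

theorem mk_iUnion_Iio_le_mul (ζ : Ordinal.{u}) (g : Set.Iio ζ → Set V)
    (hg : ∀ ξ, #↥(g ξ) ≤ ℵ₀) : #↥(⋃ ξ, g ξ) ≤ ζ.card * ℵ₀ := by
  rw [iUnion_Iio_eq]
  refine le_trans Cardinal.mk_iUnion_le_sum_mk ?_
  refine le_trans (Cardinal.sum_le_sum _ _ fun t => hg _) ?_
  rw [Cardinal.sum_const', Cardinal.mk_toType]

theorem finite_iUnion_Iio (ζ : Ordinal.{u}) (hζ : ζ.card < ℵ₀) (g : Set.Iio ζ → Set V)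
    (hg : ∀ ξ, (g ξ).Finite) : (⋃ ξ, g ξ).Finite := by
  rw [iUnion_Iio_eq]
  have hfin : Finite ζ.ToType := by
    rw [← Cardinal.mk_lt_aleph0_iff, Cardinal.mk_toType]
    exact hζ
  exact Set.finite_iUnion fun t => hg _

section Construction

variable (G : SimpleGraph V) {r : ℕ} (c : Sym2 V → Fin r) (I : Set (Fin r))
  (κ lam : Cardinal.{u}) (A B : Set V)
  (hy : ∀ At : Set V, At ⊆ A → #At < lam → ∃ a : Finset V, ↑a ⊆ A \ At ∧
    #↥(B \ NSet G c I a) < κ)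

open Classical in
noncomputable def asF : Ordinal.{u} → Finset V :=
  WellFounded.fix Ordinal.lt_wf fun ζ rec =>
    if hc : (⋃ ξ : Set.Iio ζ, ((rec ξ.1 ξ.2 : Finset V) : Set V)) ⊆ A ∧
        #↥(⋃ ξ : Set.Iio ζ, ((rec ξ.1 ξ.2 : Finset V) : Set V)) < lam then
      (hy _ hc.1 hc.2).choose
    else ∅

/-- The union of the previously chosen finite sets. -/
def AtS (ζ : Ordinal.{u}) : Set V :=
  ⋃ ξ : Set.Iio ζ, ((asF G c I κ lam A B hy ξ.1 : Finset V) : Set V)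

open Classical in
theorem asF_eq (ζ : Ordinal.{u}) :
    asF G c I κ lam A B hy ζ =
      if hc : AtS G c I κ lam A B hy ζ ⊆ A ∧ #↥(AtS G c I κ lam A B hy ζ) < lam then
        (hy _ hc.1 hc.2).choose
      else ∅ := by
  unfold asF
  rw [WellFounded.fix_eq]
  rfl

/-- The set of "bad" vertices to avoid at step `ζ`. -/
def badS (ζ : Ordinal.{u}) : Set V :=
  (⋃ ξ : Set.Iio ζ, (B \ NSet G c I (asF G c I κ lam A B hy ξ.1))) ∪
    (B \ NSet G c I (asF G c I κ lam A B hy ζ))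

open Classical in
noncomputable def ysF (v₀ : V) : Ordinal.{u} → V :=
  WellFounded.fix Ordinal.lt_wf fun ζ rec =>
    if hne : (B \ (badS G c I κ lam A B hy ζ ∪
        ⋃ ξ : Set.Iio ζ, {rec ξ.1 ξ.2})).Nonempty then
      hne.choose
    else v₀

open Classical in
theorem ysF_eq (v₀ : V) (ζ : Ordinal.{u}) :
    ysF G c I κ lam A B hy v₀ ζ =
      if hne : (B \ (badS G c I κ lam A B hy ζ ∪
          ⋃ ξ : Set.Iio ζ, {ysF G c I κ lam A B hy v₀ ξ.1})).Nonempty then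
        hne.choose
      else v₀ := by
  unfold ysF
  rw [WellFounded.fix_eq]

theorem inv_as (hκ : ℵ₀ ≤ κ) (hlaminf : ℵ₀ ≤ lam) :
    ∀ ζ : Ordinal.{u}, ζ < lam.ord →
      ↑(asF G c I κ lam A B hy ζ) ⊆ A \ AtS G c I κ lam A B hy ζ ∧
      #↥(B \ NSet G c I (asF G c I κ lam A B hy ζ)) < κ := by
  intro ζ
  induction ζ using Ordinal.induction with
  | _ ζ IH =>
    intro hζ
    have hsubA : AtS G c I κ lam A B hy ζ ⊆ A := by
      intro x hx
      rw [AtS, Set.mem_iUnion] at hx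
      obtain ⟨⟨ξ, hξ⟩, hxξ⟩ := hx
      exact ((IH ξ hξ (hξ.trans hζ)).1 hxξ).1
    have hcard : #↥(AtS G c I κ lam A B hy ζ) < lam := by
      rcases hlaminf.lt_or_eq with hlt | heq
      · have hb : #↥(AtS G c I κ lam A B hy ζ) ≤ ζ.card * ℵ₀ := by
          rw [AtS]
          exact mk_iUnion_Iio_le_mul ζ _ fun ξ =>
            (Set.Finite.lt_aleph0 (Finset.finite_toSet _)).le
        exact lt_of_le_of_lt hb
          (Cardinal.mul_lt_of_lt hlaminf (Cardinal.lt_ord.mp hζ) hlt)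
      · have hfinU : (AtS G c I κ lam A B hy ζ).Finite := by
          rw [AtS]
          refine finite_iUnion_Iio ζ ?_ _ fun ξ => Finset.finite_toSet _
          rw [heq]
          exact Cardinal.lt_ord.mp hζ
        exact lt_of_lt_of_le hfinU.lt_aleph0 heq.le
    rw [asF_eq, dif_pos ⟨hsubA, hcard⟩]
    exact (hy _ hsubA hcard).choose_spec

theorem inv_ys (hκ : ℵ₀ ≤ κ) (hlaminf : ℵ₀ ≤ lam) (hlc : lam ≤ κ.ord.cof)
    (hBc : #↥B = κ) (v₀ : V) :
    ∀ ζ : Ordinal.{u}, ζ < lam.ord →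
      ysF G c I κ lam A B hy v₀ ζ ∈ B \ (badS G c I κ lam A B hy ζ ∪
        ⋃ ξ : Set.Iio ζ, {ysF G c I κ lam A B hy v₀ ξ.1}) := by
  intro ζ hζ
  have hζcof : ζ.card < κ.ord.cof := (Cardinal.lt_ord.mp hζ).trans_le hlc
  have hbad : #↥(badS G c I κ lam A B hy ζ ∪
      ⋃ ξ : Set.Iio ζ, {ysF G c I κ lam A B hy v₀ ξ.1}) < κ := by
    refine lt_of_le_of_lt (Cardinal.mk_union_le _ _)
      (Cardinal.add_lt_of_lt hκ ?_ ?_)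
    · rw [badS]
      refine lt_of_le_of_lt (Cardinal.mk_union_le _ _)
        (Cardinal.add_lt_of_lt hκ ?_ ?_)
      · exact mk_iUnion_Iio_lt hκ hζcof _ fun ξ =>
          (inv_as G c I κ lam A B hy hκ hlaminf ξ.1 (ξ.2.trans hζ)).2
      · exact (inv_as G c I κ lam A B hy hκ hlaminf ζ hζ).2
    · refine mk_iUnion_Iio_lt hκ hζcof _ fun ξ => ?_
      rw [Cardinal.mk_singleton]
      exact lt_of_lt_of_le Cardinal.one_lt_aleph0 hκ
  have hne : (B \ (badS G c I κ lam A B hy ζ ∪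
      ⋃ ξ : Set.Iio ζ, {ysF G c I κ lam A B hy v₀ ξ.1})).Nonempty := by
    rw [Set.diff_nonempty]
    intro hsub
    have := Cardinal.mk_le_mk_of_subset hsub
    rw [hBc] at this
    exact absurd this (not_le.mpr hbad)
  rw [ysF_eq, dif_pos hne]
  exact hne.choose_spec

end Construction

theorem snoc_injective {n : ℕ} {x : Fin n → V} {z : V} (hx : Function.Injective x)
    (hz : z ∉ Set.range x) : Function.Injective (Fin.snoc x z : Fin (n + 1) → V) := by
  intro a b hab
  induction a using Fin.lastCases with
  | last =>
    induction b using Fin.lastCases with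
    | last => rfl
    | cast j =>
      rw [Fin.snoc_last, Fin.snoc_castSucc] at hab
      exact absurd ⟨j, hab.symm⟩ hz
  | cast i =>
    induction b using Fin.lastCases with
    | last =>
      rw [Fin.snoc_last, Fin.snoc_castSucc] at hab
      exact absurd ⟨i, hab⟩ hz
    | cast j =>
      rw [Fin.snoc_castSucc, Fin.snoc_castSucc] at hab
      exact congrArg Fin.castSucc (hx hab)

theorem finite_main (G : SimpleGraph V) {r : ℕ} (c : Sym2 V → Fin r) (I : Set (Fin r))
    (κ lam : Cardinal.{u}) (A B : Set V)
    (hy : ∀ At : Set V, At ⊆ A → #At < lam → ∃ a : Finset V, ↑a ⊆ A \ At ∧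
      #↥(B \ NSet G c I a) < κ)
    (hκ : ℵ₀ ≤ κ) (hBc : #↥B = κ) (n : ℕ) (hn : ∀ k : ℕ, k < n → (k : Cardinal.{u}) < lam) :
    ∃ (x : Fin n → V) (T : Set V), Function.Injective x ∧ (∀ j, x j ∈ A) ∧ T ⊆ B ∧
      κ ≤ #T ∧ ∀ j, T ⊆ ⋃ i ∈ I, (colGraph G c i).neighborSet (x j) := by
  suffices haux : ∀ k : ℕ, k ≤ n →
      ∃ (x : Fin k → V) (T : Set V), Function.Injective x ∧ (∀ j, x j ∈ A) ∧ T ⊆ B ∧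
        κ ≤ #T ∧ ∀ j, T ⊆ ⋃ i ∈ I, (colGraph G c i).neighborSet (x j) from haux n le_rfl
  intro k
  induction k with
  | zero =>
    intro _
    exact ⟨Fin.elim0, B, fun a => a.elim0, fun j => j.elim0, subset_rfl, hBc.ge,
      fun j => j.elim0⟩
  | succ k ih =>
    intro hk
    obtain ⟨x, T, hinj, hxA, hTB, hTκ, hadj⟩ := ih (Nat.le_of_succ_le hk)
    have h1 : Set.range x ⊆ A := by
      rintro _ ⟨j, rfl⟩
      exact hxA j
    have h2 : #↥(Set.range x) < lam := by
      classical
      have hfs : Set.range x = ↑(Finset.image x Finset.univ) := by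
        simp [Finset.coe_image]
      have hle : #↥(Set.range x) ≤ (k : Cardinal.{u}) := by
        have hcard : (Finset.image x Finset.univ).card ≤ k :=
          Finset.card_image_le.trans (by simp)
        rw [hfs]
        refine le_trans (le_of_eq Cardinal.mk_coe_finset) ?_
        exact_mod_cast hcard
      exact lt_of_le_of_lt hle (hn k (Nat.lt_of_succ_le hk))
    obtain ⟨a, haA, hasmall⟩ := hy _ h1 h2
    have hbig : κ ≤ #↥(T ∩ ⋃ x ∈ a, ⋃ i ∈ I, (colGraph G c i).neighborSet x) :=
      remain_big hκ hTB hTκ hasmall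
    obtain ⟨z, hza, hz⟩ :=
      exists_big hκ (fun x => ⋃ i ∈ I, (colGraph G c i).neighborSet x) T a hbig
    have hzA : z ∈ A \ Set.range x := haA hza
    refine ⟨Fin.snoc x z, T ∩ ⋃ i ∈ I, (colGraph G c i).neighborSet z,
      snoc_injective hinj hzA.2, ?_, fun t ht => hTB ht.1, hz, ?_⟩
    · intro j
      induction j using Fin.lastCases with
      | last => rw [Fin.snoc_last]; exact hzA.1
      | cast i => rw [Fin.snoc_castSucc]; exact hxA i
    · intro j
      induction j using Fin.lastCases with
      | last => rw [Fin.snoc_last]; exact Set.inter_subset_right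
      | cast i =>
        rw [Fin.snoc_castSucc]
        exact Set.inter_subset_left.trans (hadj i)

end Stmt13Aux

/-- Existence of a λ-configuration in colours `I`. -/
theorem stmt13 {V : Type u} (G : SimpleGraph V) (κ lam : Cardinal.{u})
    (hκ : ℵ₀ ≤ κ) (hlam : lam ≤ κ.ord.cof) (A B : Set V)
    (hH : IsHDecomp G κ A B)
    (r : ℕ) (c : Sym2 V → Fin r) (I : Set (Fin r))
    (h : ∀ At : Set V, At ⊆ A → #At < lam → ∃ a : Finset V, ↑a ⊆ A \ At ∧
      #↥(B \ ⋃ x ∈ a, ⋃ i ∈ I, (colGraph G c i).neighborSet x) < κ) :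
    ∃ (as : Ordinal.{u} → Finset V) (ys : Ordinal.{u} → V),
      (∀ ξ < lam.ord, ↑(as ξ) ⊆ A) ∧
      (∀ ξ ζ : Ordinal.{u}, ξ < ζ → ζ < lam.ord → Disjoint (as ξ) (as ζ)) ∧
      Set.InjOn ys (Set.Iio lam.ord) ∧
      (∀ ξ ζ : Ordinal.{u}, ξ ≤ ζ → ζ < lam.ord →
        ∃ x ∈ as ξ, ∃ i ∈ I, (colGraph G c i).Adj x (ys ζ)) := by
  classical
  obtain ⟨af, bf, hai, hbi, hAeq, hBeq, hadjH⟩ := hH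
  have hBc : #↥B = κ := by
    have h1 := Cardinal.mk_image_eq_of_injOn_lift bf (Set.Iio κ.ord) hbi
    rw [hBeq, Ordinal.mk_Iio_ordinal, Cardinal.lift_lift, Cardinal.card_ord] at h1
    exact Cardinal.lift_inj.mp h1
  have hκ0 : κ ≠ 0 := (Cardinal.aleph0_pos.trans_le hκ).ne'
  have hBne : Nonempty ↥B := Cardinal.mk_ne_zero_iff.mp (by rw [hBc]; exact hκ0)
  obtain ⟨v₀⟩ := hBne
  have hy : ∀ At : Set V, At ⊆ A → #At < lam → ∃ a : Finset V, ↑a ⊆ A \ At ∧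
      #↥(B \ Stmt13Aux.NSet G c I a) < κ := h
  rcases lt_or_ge lam ℵ₀ with hfin | hlaminf
  · -- the case of finite `lam`
    obtain ⟨n, hn⟩ := Cardinal.lt_aleph0.mp hfin
    have hnk : ∀ k : ℕ, k < n → (k : Cardinal.{u}) < lam := by
      intro k hk
      rw [hn]
      exact_mod_cast hk
    obtain ⟨x, T, hinj, hxA, hTB, hTκ, hadjT⟩ :=
      Stmt13Aux.finite_main G c I κ lam A B hy hκ hBc n hnk
    have hTinf : Infinite ↥T := Cardinal.aleph0_le_mk_iff.mp (hκ.trans hTκ)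
    set g := Infinite.natEmbedding ↥T with hg
    have key : ∀ ξ : Ordinal.{u}, ξ < lam.ord →
        ξ.card.toNat < n ∧ ξ = (ξ.card.toNat : Ordinal.{u}) := by
      intro ξ hξ
      rw [hn, Cardinal.ord_nat] at hξ
      obtain ⟨m, rfl⟩ := Ordinal.lt_omega0.mp (hξ.trans (Ordinal.nat_lt_omega0 n))
      rw [Ordinal.card_nat, Cardinal.toNat_natCast]
      exact ⟨Nat.cast_lt.mp hξ, rfl⟩
    refine ⟨fun ξ => if hξ : ξ < lam.ord then {x ⟨ξ.card.toNat, (key ξ hξ).1⟩} else ∅,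
      fun ξ => (g ξ.card.toNat : V), ?_, ?_, ?_, ?_⟩
    · intro ξ hξ
      beta_reduce
      rw [dif_pos hξ]
      intro v hv
      rw [Finset.coe_singleton, Set.mem_singleton_iff] at hv
      exact hv ▸ hxA _
    · intro ξ ζ hlt hζ
      have hξ : ξ < lam.ord := hlt.trans hζ
      beta_reduce
      rw [dif_pos hξ, dif_pos hζ, Finset.disjoint_singleton]
      intro hcontra
      have h2 : ξ.card.toNat = ζ.card.toNat := congrArg Fin.val (hinj hcontra)
      have h3 : ξ = ζ := by
        rw [(key ξ hξ).2, (key ζ hζ).2, h2]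
      exact hlt.ne h3
    · intro ξ hξ ζ hζ heq2
      have h1 : g ξ.card.toNat = g ζ.card.toNat := Subtype.coe_injective heq2
      have h2 : ξ.card.toNat = ζ.card.toNat := g.injective h1
      rw [(key ξ hξ).2, (key ζ hζ).2, h2]
    · intro ξ ζ hle hζ
      have hξ : ξ < lam.ord := hle.trans_lt hζ
      refine ⟨x ⟨ξ.card.toNat, (key ξ hξ).1⟩, by beta_reduce; rw [dif_pos hξ]; exact Finset.mem_singleton_self _, ?_⟩
      have hmem : (g ζ.card.toNat : V) ∈
          ⋃ i ∈ I, (colGraph G c i).neighborSet (x ⟨ξ.card.toNat, (key ξ hξ).1⟩) :=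
        hadjT _ (g ζ.card.toNat).2
      rw [Set.mem_iUnion₂] at hmem
      obtain ⟨i, hi, hmemN⟩ := hmem
      exact ⟨i, hi, hmemN⟩
  · -- the case of infinite `lam`
    have hinv := Stmt13Aux.inv_as G c I κ lam A B hy hκ hlaminf
    have hinvy := Stmt13Aux.inv_ys G c I κ lam A B hy hκ hlaminf hlam hBc (↑v₀)
    refine ⟨Stmt13Aux.asF G c I κ lam A B hy, Stmt13Aux.ysF G c I κ lam A B hy (↑v₀),
      ?_, ?_, ?_, ?_⟩
    · exact fun ξ hξ v hv => ((hinv ξ hξ).1 hv).1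
    · intro ξ ζ hlt hζ
      rw [Finset.disjoint_left]
      intro v hvξ hvζ
      refine ((hinv ζ hζ).1 (Finset.mem_coe.mpr hvζ)).2 ?_
      rw [Stmt13Aux.AtS, Set.mem_iUnion]
      exact ⟨⟨ξ, hlt⟩, hvξ⟩
    · have keyy : ∀ ξ ζ : Ordinal.{u}, ξ < ζ → ζ < lam.ord →
          Stmt13Aux.ysF G c I κ lam A B hy (↑v₀) ξ ≠
            Stmt13Aux.ysF G c I κ lam A B hy (↑v₀) ζ := by
        intro ξ ζ hlt hζ hcontra
        refine (hinvy ζ hζ).2 (Set.mem_union_right _ ?_)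
        rw [Set.mem_iUnion]
        exact ⟨⟨ξ, hlt⟩, Set.mem_singleton_iff.mpr hcontra.symm⟩
      intro ξ hξ ζ hζ heq2
      by_contra hne2
      rcases Ne.lt_or_gt hne2 with hl | hl
      · exact keyy ξ ζ hl hζ heq2
      · exact keyy ζ ξ hl hξ heq2.symm
    · intro ξ ζ hle hζ
      have hyB := (hinvy ζ hζ).1
      have hnotbad := (hinvy ζ hζ).2
      have hmem : Stmt13Aux.ysF G c I κ lam A B hy (↑v₀) ζ ∈
          Stmt13Aux.NSet G c I (Stmt13Aux.asF G c I κ lam A B hy ξ) := by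
        rcases hle.lt_or_eq with hlt | hemm
        · by_contra hnot
          refine hnotbad (Set.mem_union_left _ ?_)
          refine Set.mem_union_left _ ?_
          rw [Set.mem_iUnion]
          exact ⟨⟨ξ, hlt⟩, hyB, hnot⟩
        · subst hemm
          by_contra hnot
          exact hnotbad (Set.mem_union_left _ (Set.mem_union_right _ ⟨hyB, hnot⟩))
      simp only [Stmt13Aux.NSet, Set.mem_iUnion, exists_prop] at hmem
      obtain ⟨xx, hxx, i, hi, hmemN⟩ := hmem
      exact ⟨xx, hxx, i, hi, hmemN⟩
end
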